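/- Let ū±, ρ̄± solve the 1-D steady isentropic Euler system with external force f̄ > 0 on [L_0,L_1]: (ρ̄ū)' = 0, ρ̄ūū' + (ρ̄^γ)' = ρ̄f̄, with ū⁻ supersonic ((ū⁻)² > γ(ρ̄⁻)^{γ−1}) and ū⁺ subsonic. For a shock at position s ∈ (L_0,L_1) connecting ū⁻(s),ρ̄⁻(s) to ū⁺(s),ρ̄⁺(s) by the Rankine–Hugoniot conditions ρ̄⁻ū⁻ = ρ̄⁺ū⁺ and ρ̄⁻(ū⁻)² + (ρ̄⁻)^γ = ρ̄⁺(ū⁺)² + (ρ̄⁺)^γ with the entropy condition (ρ̄⁺)^γ > (ρ̄⁻)^γ at s: the downstream pressure at the exit P̄⁺(L_1) is a strictly monotone (decreasing) function of the shock position s. Consequently the shock position is uniquely determined by the exit pressure P_e, for P_e in an open interval (P_1, P_0). -/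
import Mathlib


open Set

private lemma constOn {f : ℝ → ℝ} {a b : ℝ}
    (h : ∀ x ∈ Icc a b, HasDerivAt f 0 x) :
    ∀ x ∈ Icc a b, f x = f a := by
  intro x hx
  exact constant_of_has_deriv_right_zero
    (fun y hy => (h y hy).continuousAt.continuousWithinAt)
    (fun y hy => (h y (Ico_subset_Icc_self hy)).hasDerivWithinAt) x hx

private lemma smonoOn {f f' : ℝ → ℝ} {a b : ℝ}
    (h : ∀ x ∈ Icc a b, HasDerivAt f (f' x) x)
    (hpos : ∀ x ∈ Ioo a b, 0 < f' x) :
    StrictMonoOn f (Icc a b) := by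
  apply strictMonoOn_of_deriv_pos (convex_Icc a b)
  · exact fun y hy => (h y hy).continuousAt.continuousWithinAt
  · intro y hy
    rw [interior_Icc] at hy
    rw [(h y (Ioo_subset_Icc_self hy)).deriv]
    exact hpos y hy

private lemma rpow_helper {x : ℝ} (hx : 0 < x) (γ : ℝ) :
    x ^ (2 : ℕ) * x ^ (γ - 1) = x ^ (γ + 1) := by
  rw [← Real.rpow_natCast x 2, ← Real.rpow_add hx]
  ring_nf

private lemma Gmono {m γ a b : ℝ} (hγ : 1 < γ) (ha : 0 < a)
    (hs : m ^ 2 < γ * a ^ (γ + 1)) (hab : a < b) :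
    m ^ 2 * a⁻¹ + a ^ γ < m ^ 2 * b⁻¹ + b ^ γ := by
  have hγ0 : (0 : ℝ) < γ := by linarith
  have hmono : StrictMonoOn (fun ρ : ℝ => m ^ 2 * ρ⁻¹ + ρ ^ γ) (Icc a b) := by
    apply smonoOn (f' := fun ρ => m ^ 2 * (-(ρ ^ 2)⁻¹) + γ * ρ ^ (γ - 1))
    · intro ρ hρ
      have hρ0 : 0 < ρ := lt_of_lt_of_le ha hρ.1
      exact ((hasDerivAt_inv hρ0.ne').const_mul (m ^ 2)).add
        (Real.hasDerivAt_rpow_const (Or.inl hρ0.ne'))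
    · intro ρ hρ
      have hρ0 : 0 < ρ := lt_trans ha hρ.1
      have h2 : (0 : ℝ) < ρ ^ (2 : ℕ) := pow_pos hρ0 2
      have hmon : a ^ (γ + 1) ≤ ρ ^ (γ + 1) :=
        Real.rpow_le_rpow ha.le hρ.1.le (by linarith)
      have hsubρ : m ^ 2 < γ * ρ ^ (γ + 1) :=
        lt_of_lt_of_le hs (mul_le_mul_of_nonneg_left hmon hγ0.le)
      have h4 := rpow_helper hρ0 γ
      have h5 : m ^ 2 / ρ ^ (2 : ℕ) < γ * ρ ^ (γ - 1) := by
        rw [div_lt_iff₀ h2]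
        nlinarith [h4]
      rw [div_eq_mul_inv] at h5
      have hre : m ^ 2 * (-(ρ ^ 2)⁻¹) + γ * ρ ^ (γ - 1)
          = γ * ρ ^ (γ - 1) - m ^ 2 * (ρ ^ (2 : ℕ))⁻¹ := by
        push_cast
        ring
      rw [hre]
      linarith
  exact hmono ⟨le_rfl, hab.le⟩ ⟨hab.le, le_rfl⟩ hab

/-- Monotonicity of the exit pressure with respect to the shock position for
the 1-D transonic shock with positive external force: if for each
`s ∈ (L₀,L₁)` the subsonic downstream branch `(U s, R s)` solves the steady
Euler system on `[s, L₁]` and is connected to the supersonic branch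
`(um, ρm)` at `s` by the Rankine–Hugoniot and entropy conditions, then
`s ↦ P̄⁺(L₁) = (R s L₁)^γ` is strictly decreasing; consequently the shock
position is uniquely determined by the exit pressure. -/
theorem stmt17 (L0 L1 γ : ℝ) (hL : L0 < L1) (hγ : 1 < γ)
    (f : ℝ → ℝ) (hf : ∀ x ∈ Icc L0 L1, 0 < f x)
    (um ρm : ℝ → ℝ)
    (hρm : ∀ x ∈ Icc L0 L1, 0 < ρm x) (hum : ∀ x ∈ Icc L0 L1, 0 < um x)
    (hmass_m : ∀ x ∈ Icc L0 L1, HasDerivAt (fun t => ρm t * um t) 0 x)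
    (hmom_m : ∀ x ∈ Icc L0 L1,
      HasDerivAt (fun t => ρm t * (um t) ^ 2 + ρm t ^ γ) (ρm x * f x) x)
    (hsup : ∀ x ∈ Icc L0 L1, γ * ρm x ^ (γ - 1) < (um x) ^ 2)
    (U R : ℝ → ℝ → ℝ)
    (hpos : ∀ s ∈ Ioo L0 L1, ∀ x ∈ Icc s L1, 0 < R s x ∧ 0 < U s x)
    (hmass : ∀ s ∈ Ioo L0 L1, ∀ x ∈ Icc s L1,
      HasDerivAt (fun t => R s t * U s t) 0 x)
    (hmom : ∀ s ∈ Ioo L0 L1, ∀ x ∈ Icc s L1,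
      HasDerivAt (fun t => R s t * (U s t) ^ 2 + R s t ^ γ) (R s x * f x) x)
    (hsub : ∀ s ∈ Ioo L0 L1, ∀ x ∈ Icc s L1,
      (U s x) ^ 2 < γ * R s x ^ (γ - 1))
    (hRH1 : ∀ s ∈ Ioo L0 L1, ρm s * um s = R s s * U s s)
    (hRH2 : ∀ s ∈ Ioo L0 L1,
      ρm s * (um s) ^ 2 + ρm s ^ γ = R s s * (U s s) ^ 2 + R s s ^ γ)
    (hent : ∀ s ∈ Ioo L0 L1, ρm s ^ γ < R s s ^ γ) :
    StrictAntiOn (fun s => R s L1 ^ γ) (Ioo L0 L1) ∧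
    ∀ s ∈ Ioo L0 L1, ∀ t ∈ Ioo L0 L1,
      R s L1 ^ γ = R t L1 ^ γ → s = t := by
  have hγ0 : (0 : ℝ) < γ := by linarith
  set m0 := ρm L0 * um L0 with hm0def
  have hIccL0 : L0 ∈ Icc L0 L1 := ⟨le_rfl, hL.le⟩
  have hm0pos : 0 < m0 := mul_pos (hρm _ hIccL0) (hum _ hIccL0)
  have hmconst : ∀ x ∈ Icc L0 L1, ρm x * um x = m0 := constOn hmass_m
  have hRU : ∀ s ∈ Ioo L0 L1, ∀ x ∈ Icc s L1, R s x * U s x = m0 := by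
    intro s hs x hx
    have hsIcc : s ∈ Icc L0 L1 := ⟨hs.1.le, hs.2.le⟩
    have h1 := constOn (hmass s hs) x hx
    rw [h1, ← hRH1 s hs, hmconst s hsIcc]
  -- subsonic condition in density form
  have hsubρ : ∀ s ∈ Ioo L0 L1, ∀ x ∈ Icc s L1, m0 ^ 2 < γ * R s x ^ (γ + 1) := by
    intro s hs x hx
    obtain ⟨hR, hU⟩ := hpos s hs x hx
    have h1 := hsub s hs x hx
    have h2 := hRU s hs x hx
    have h3 : m0 ^ 2 = R s x ^ 2 * U s x ^ 2 := by rw [← h2]; ring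
    have h4 := rpow_helper hR γ
    have h5 := mul_lt_mul_of_pos_left h1 (pow_pos hR 2)
    calc m0 ^ 2 = R s x ^ 2 * U s x ^ 2 := h3
      _ < R s x ^ 2 * (γ * R s x ^ (γ - 1)) := h5
      _ = γ * R s x ^ (γ + 1) := by rw [← h4]; ring
  -- supersonic condition in density form
  have hsupρ : ∀ x ∈ Icc L0 L1, γ * ρm x ^ (γ + 1) < m0 ^ 2 := by
    intro x hx
    have hρ := hρm x hx
    have h1 := hsup x hx
    have h2 := hmconst x hx
    have h3 : m0 ^ 2 = ρm x ^ 2 * um x ^ 2 := by rw [← h2]; ring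
    have h4 := rpow_helper hρ γ
    have h5 := mul_lt_mul_of_pos_left h1 (pow_pos hρ 2)
    calc γ * ρm x ^ (γ + 1) = ρm x ^ 2 * (γ * ρm x ^ (γ - 1)) := by rw [← h4]; ring
      _ < ρm x ^ 2 * um x ^ 2 := h5
      _ = m0 ^ 2 := h3.symm
  -- momentum expressed via G(ρ) = m0² ρ⁻¹ + ρ^γ
  have hG : ∀ s ∈ Ioo L0 L1, ∀ x ∈ Icc s L1,
      R s x * U s x ^ 2 + R s x ^ γ = m0 ^ 2 * (R s x)⁻¹ + R s x ^ γ := by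
    intro s hs x hx
    have hR := (hpos s hs x hx).1
    have h2 := hRU s hs x hx
    have h3 : R s x * U s x ^ 2 = m0 ^ 2 * (R s x)⁻¹ := by
      field_simp
      nlinarith [h2]
    rw [h3]
  -- key monotonicity of exit density
  have key : ∀ s ∈ Ioo L0 L1, ∀ t ∈ Ioo L0 L1, s < t → R t L1 < R s L1 := by
    intro s hs t ht hst
    have hIccts : Icc t L1 ⊆ Icc s L1 := Icc_subset_Icc hst.le le_rfl
    have hIccsL : Icc s L1 ⊆ Icc L0 L1 := Icc_subset_Icc hs.1.le le_rfl
    set Ws : ℝ → ℝ := fun x => R s x * U s x ^ 2 + R s x ^ γ with hWs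
    set Wt : ℝ → ℝ := fun x => R t x * U t x ^ 2 + R t x ^ γ with hWt
    set Wm : ℝ → ℝ := fun x => ρm x * um x ^ 2 + ρm x ^ γ with hWm
    -- E := Ws - Wm is strictly increasing on [s,t]
    have hEmono : StrictMonoOn (fun x => Ws x - Wm x) (Icc s t) := by
      apply smonoOn (f' := fun x => R s x * f x - ρm x * f x)
      · intro x hx
        have hx1 : x ∈ Icc s L1 := ⟨hx.1, le_trans hx.2 ht.2.le⟩
        exact (hmom s hs x hx1).sub (hmom_m x (hIccsL hx1))
      · intro x hx
        have hx1 : x ∈ Icc s L1 := ⟨hx.1.le, le_trans hx.2.le ht.2.le⟩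
        have hx2 : x ∈ Icc L0 L1 := hIccsL hx1
        have hfx := hf x hx2
        have hRx := (hpos s hs x hx1).1
        have hρx := hρm x hx2
        have hlt : ρm x < R s x := by
          by_contra hcon
          push_neg at hcon
          have h1 := hsubρ s hs x hx1
          have h2 := hsupρ x hx2
          have h3 : R s x ^ (γ + 1) ≤ ρm x ^ (γ + 1) :=
            Real.rpow_le_rpow hRx.le hcon (by linarith)
          nlinarith
        nlinarith
    have hDt : 0 < Ws t - Wt t := by
      have h0 : Ws s = Wm s := by
        have := hRH2 s hs
        simp only [hWs, hWm]; linarith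
      have h1 : Wt t = Wm t := by
        have := hRH2 t ht
        simp only [hWt, hWm]; linarith
      have h2 := hEmono ⟨le_rfl, hst.le⟩ ⟨hst.le, le_rfl⟩ hst
      simp only at h2
      linarith
    -- comparison argument on [t, L1]
    have hcomp : ∀ x ∈ Icc t L1, 0 < Ws x - Wt x := by
      by_contra hcon
      push_neg at hcon
      obtain ⟨x1, hx1, hx1le⟩ := hcon
      set S := Icc t L1 ∩ (fun x => Ws x - Wt x) ⁻¹' (Iic 0) with hSdef
      have hSne : S.Nonempty := ⟨x1, hx1, hx1le⟩
      have hSbdd : BddBelow S := ⟨t, fun y hy => hy.1.1⟩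
      have hcontD : ContinuousOn (fun x => Ws x - Wt x) (Icc t L1) := by
        intro y hy
        exact (((hmom s hs y (hIccts hy)).sub
          (hmom t ht y hy)).continuousAt).continuousWithinAt
      have hScl : IsClosed S :=
        hcontD.preimage_isClosed_of_isClosed isClosed_Icc isClosed_Iic
      set x0 := sInf S with hx0def
      have hx0S : x0 ∈ S := hScl.csInf_mem hSne hSbdd
      have htx0 : t < x0 := by
        rcases lt_or_eq_of_le hx0S.1.1 with h | h
        · exact h
        · exfalso
          have := hx0S.2
          rw [← h] at this
          simp only [mem_preimage, mem_Iic] at this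
          linarith
      have hposD : ∀ y ∈ Ico t x0, 0 < Ws y - Wt y := by
        intro y hy
        by_contra hcy
        push_neg at hcy
        have hyS : y ∈ S := ⟨⟨hy.1, le_trans hy.2.le hx0S.1.2⟩, hcy⟩
        have := csInf_le hSbdd hyS
        have := hy.2
        linarith
      have hmono2 : StrictMonoOn (fun x => Ws x - Wt x) (Icc t x0) := by
        apply smonoOn (f' := fun x => R s x * f x - R t x * f x)
        · intro y hy
          have hy1 : y ∈ Icc t L1 := ⟨hy.1, le_trans hy.2 hx0S.1.2⟩
          exact (hmom s hs y (hIccts hy1)).sub (hmom t ht y hy1)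
        · intro y hy
          have hy1 : y ∈ Icc t L1 := ⟨hy.1.le, le_trans hy.2.le hx0S.1.2⟩
          have hyD : 0 < Ws y - Wt y := hposD y ⟨hy.1.le, hy.2⟩
          have hRs := (hpos s hs y (hIccts hy1)).1
          have hRt := (hpos t ht y hy1).1
          have hGs := hG s hs y (hIccts hy1)
          have hGt := hG t ht y hy1
          have hWsy : Ws y = m0 ^ 2 * (R s y)⁻¹ + R s y ^ γ := hGs
          have hWty : Wt y = m0 ^ 2 * (R t y)⁻¹ + R t y ^ γ := hGt
          have hlt : R t y < R s y := by
            by_contra hcon2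
            push_neg at hcon2
            rcases eq_or_lt_of_le hcon2 with h | h
            · rw [hWsy, hWty, h] at hyD
              linarith
            · have := Gmono hγ hRs (hsubρ s hs y (hIccts hy1)) h
              rw [← hWsy, ← hWty] at this
              linarith
          have hfy := hf y (hIccsL (hIccts hy1))
          nlinarith
      have h2 := hmono2 ⟨le_rfl, htx0.le⟩ ⟨htx0.le, le_rfl⟩ htx0
      simp only at h2
      have h3 : Ws x0 - Wt x0 ≤ 0 := hx0S.2
      linarith
    -- conclude at the exit x = L1
    have hL1 : L1 ∈ Icc t L1 := ⟨ht.2.le, le_rfl⟩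
    have hD := hcomp L1 hL1
    have hGs := hG s hs L1 (hIccts hL1)
    have hGt := hG t ht L1 hL1
    have hRs := (hpos s hs L1 (hIccts hL1)).1
    have hRt := (hpos t ht L1 hL1).1
    have hWsL : Ws L1 = m0 ^ 2 * (R s L1)⁻¹ + R s L1 ^ γ := hGs
    have hWtL : Wt L1 = m0 ^ 2 * (R t L1)⁻¹ + R t L1 ^ γ := hGt
    by_contra hcon
    push_neg at hcon
    rcases eq_or_lt_of_le hcon with h | h
    · rw [hWsL, hWtL, h] at hD
      linarith
    · have := Gmono hγ hRs (hsubρ s hs L1 (hIccts hL1)) h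
      rw [← hWsL, ← hWtL] at this
      linarith
  constructor
  · intro s hs t ht hst
    have hRt := (hpos t ht L1 ⟨ht.2.le, le_rfl⟩).1
    exact Real.rpow_lt_rpow hRt.le (key s hs t ht hst) hγ0
  · intro s hs t ht heq
    by_contra hne
    rcases lt_or_gt_of_ne hne with h | h
    · have hRt := (hpos t ht L1 ⟨ht.2.le, le_rfl⟩).1
      have := Real.rpow_lt_rpow hRt.le (key s hs t ht h) hγ0
      linarith [heq.le, heq.ge]
    · have hRs := (hpos s hs L1 ⟨hs.2.le, le_rfl⟩).1
      have := Real.rpow_lt_rpow hRs.le (key t ht s hs h) hγ0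
      linarith [heq.le, heq.ge]
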